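/- Let W be the set of finite strictly increasing sequences of natural numbers. For each l > 0, the interaction scheme i_l is injective on pairs of form l: if {x,y} and {x',y'} both have form l and i_l({x,y}) = i_l({x',y'}), then {x,y} = {x',y'}. -/

import Mathlib

/-- Accumulated lengths of a list of lists. -/
def accLengths : ℕ → List (List ℕ) → List ℕ
  | _, [] => []
  | acc, l :: ls => (acc + l.length) :: accLengths (acc + l.length) ls

/-- Interleaved concatenation of two lists of lists. -/
def interact : List (List ℕ) → List (List ℕ) → List ℕ
  | [], ys => ys.flatten
  | x :: xs, [] => (x :: xs).flatten
  | x :: xs, y :: ys => x ++ y ++ interact xs ys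

/-- `FormBody ka kb x y zs`: `x` decomposes into `ka` nonempty pieces, `y` into `kb`
nonempty pieces, and `zs` is the associated interaction scheme
`c ∗ a₁ ∗ d ∗ b₁ ∗ a₂ ∗ b₂ ∗ …`, which is strictly increasing (equivalently the
interleaving condition `c < a₁ < d < b₁ < a₂ < … ` holds). -/
def FormBody (ka kb : ℕ) (x y zs : List ℕ) : Prop :=
  ∃ a as b bs, x.length < y.length ∧
    x = (a :: as).flatten ∧ y = (b :: bs).flatten ∧
    (∀ l ∈ a :: as, l ≠ []) ∧ (∀ l ∈ b :: bs, l ≠ []) ∧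
    (a :: as).length = ka ∧ (b :: bs).length = kb ∧
    zs = accLengths 0 (a :: as) ++ a ++ accLengths 0 (b :: bs) ++ b ++ interact as bs ∧
    List.Pairwise (· < ·) zs

/-- `zs` is the interaction scheme `i_l({x,y})` of the pair `{x,y}` of form `l`. -/
def InterScheme (l : ℕ) (x y zs : List ℕ) : Prop :=
  (∃ k, 0 < k ∧ l = 2 * k - 1 ∧ FormBody k k x y zs) ∨
  (∃ k, 0 < k ∧ l = 2 * k ∧ FormBody (k + 1) k x y zs)

lemma accLengths_length (n : ℕ) (L : List (List ℕ)) :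
    (accLengths n L).length = L.length := by
  induction L generalizing n <;> simp [accLengths, *]

lemma accLengths_inj (n : ℕ) (L1 L2 : List (List ℕ))
    (h : accLengths n L1 = accLengths n L2) :
    L1.map List.length = L2.map List.length := by
  induction L1 generalizing n L2 with
  | nil => cases L2 <;> simp_all [accLengths]
  | cons a as ih =>
    cases L2 with
    | nil => simp [accLengths] at h
    | cons b bs =>
      simp only [accLengths, List.cons.injEq] at h
      obtain ⟨h1, h2⟩ := h
      have hl : a.length = b.length := by omega
      rw [hl] at h2
      simp only [List.map_cons, hl, List.cons.injEq, true_and]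
      exact ih _ _ h2

lemma interact_inj (as : List (List ℕ)) : ∀ (bs as' bs' : List (List ℕ)),
    as.map List.length = as'.map List.length →
    bs.map List.length = bs'.map List.length →
    interact as bs = interact as' bs' →
    as.flatten = as'.flatten ∧ bs.flatten = bs'.flatten := by
  induction as with
  | nil =>
    intro bs as' bs' ha hb h
    cases as' with
    | cons a' as'' => simp at ha
    | nil =>
      simp only [interact] at h
      exact ⟨rfl, h⟩
  | cons a as ih =>
    intro bs as' bs' ha hb h
    cases as' with
    | nil => simp at ha
    | cons a' as'' =>
      simp only [List.map_cons, List.cons.injEq] at ha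
      obtain ⟨hal, ha⟩ := ha
      cases bs with
      | nil =>
        cases bs' with
        | cons b' bs'' => simp at hb
        | nil =>
          simp only [interact] at h
          exact ⟨h, rfl⟩
      | cons b bs =>
        cases bs' with
        | nil => simp at hb
        | cons b' bs'' =>
          simp only [List.map_cons, List.cons.injEq] at hb
          obtain ⟨hbl, hb⟩ := hb
          simp only [interact, List.append_assoc] at h
          obtain ⟨h1, h2⟩ := List.append_inj h hal
          obtain ⟨h3, h4⟩ := List.append_inj h2 hbl
          obtain ⟨hx, hy⟩ := ih bs as'' bs'' ha hb h4
          simp only [List.flatten_cons]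
          exact ⟨by rw [h1, hx], by rw [h3, hy]⟩

lemma formBody_inj (ka kb : ℕ) (x y x' y' zs : List ℕ)
    (h : FormBody ka kb x y zs) (h' : FormBody ka kb x' y' zs) :
    x = x' ∧ y = y' := by
  obtain ⟨a, as, b, bs, -, hx, hy, -, -, hka, hkb, hzs, -⟩ := h
  obtain ⟨a', as', b', bs', -, hx', hy', -, -, hka', hkb', hzs', -⟩ := h'
  rw [hzs'] at hzs
  simp only [List.append_assoc] at hzs
  -- peel off the accLengths of the a-part
  have hlenC : (accLengths 0 (a' :: as')).length = (accLengths 0 (a :: as)).length := by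
    rw [accLengths_length, accLengths_length, hka, hka']
  obtain ⟨hC, hzs1⟩ := List.append_inj hzs hlenC
  have hCm := accLengths_inj 0 _ _ hC
  simp only [List.map_cons, List.cons.injEq] at hCm
  obtain ⟨hal, hasm⟩ := hCm
  -- peel off a
  obtain ⟨ha, hzs2⟩ := List.append_inj hzs1 hal
  -- peel off the accLengths of the b-part
  have hlenD : (accLengths 0 (b' :: bs')).length = (accLengths 0 (b :: bs)).length := by
    rw [accLengths_length, accLengths_length, hkb, hkb']
  obtain ⟨hD, hzs3⟩ := List.append_inj hzs2 hlenD
  have hDm := accLengths_inj 0 _ _ hD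
  simp only [List.map_cons, List.cons.injEq] at hDm
  obtain ⟨hbl, hbsm⟩ := hDm
  -- peel off b
  obtain ⟨hb, hzs4⟩ := List.append_inj hzs3 hbl
  -- remaining interleaved part
  obtain ⟨hfa, hfb⟩ := interact_inj as' bs' as bs hasm hbsm hzs4
  constructor
  · rw [hx, hx']; simp only [List.flatten_cons]; rw [ha, hfa]
  · rw [hy, hy']; simp only [List.flatten_cons]; rw [hb, hfb]

/-- For `l > 0` the interaction scheme is injective on pairs of form `l`. -/
theorem inter_scheme_injective (l : ℕ) (hl : 0 < l) (x y x' y' zs : List ℕ)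
    (h : InterScheme l x y zs) (h' : InterScheme l x' y' zs) :
    x = x' ∧ y = y' := by
  rcases h with ⟨k, hk, hlk, hf⟩ | ⟨k, hk, hlk, hf⟩ <;>
    rcases h' with ⟨k', hk', hlk', hf'⟩ | ⟨k', hk', hlk', hf'⟩
  · have : k = k' := by omega
    subst this
    have := formBody_inj k k x' y' x y zs hf' hf
    exact ⟨this.1.symm, this.2.symm⟩
  · omega
  · omega
  · have : k = k' := by omega
    subst this
    have := formBody_inj (k + 1) k x' y' x y zs hf' hf
    exact ⟨this.1.symm, this.2.symm⟩
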